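/- Let M be a C-algebra with T, F, U, and define Ann(a) = {α ∈ M : (α ∧ a) ∨ (¬α ∧ a) = U}. Then for all a, b ∈ M: b ∈ Ann(a) if and only if a ∈ Ann(b). -/
import Mathlib


/-- A C-algebra (Guzmán–Squier): algebra of McCarthy's three-valued conditional logic. -/
class CAlgebra (M : Type*) where
  or : M → M → M
  and : M → M → M
  neg : M → M
  c1 : ∀ a, neg (neg a) = a
  c2 : ∀ a b, neg (and a b) = or (neg a) (neg b)
  c3 : ∀ a b c, and (and a b) c = and a (and b c)
  c4 : ∀ a b c, and a (or b c) = or (and a b) (and a c)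
  c5 : ∀ a b c, and (or a b) c = or (and a c) (and (neg a) (and b c))
  c6 : ∀ a b, or a (and a b) = a
  c7 : ∀ a b, or (and a b) (and b a) = or (and b a) (and a b)

/-- A C-algebra with constants T, F, U. -/
class CAlgebraTFU (M : Type*) extends CAlgebra M where
  T : M
  F : M
  U : M
  T_and : ∀ a : M, and T a = a
  and_T : ∀ a : M, and a T = a
  F_or : ∀ a : M, or F a = a
  or_F : ∀ a : M, or a F = a
  neg_U : neg U = U
  U_and : ∀ a : M, and U a = U
  U_or : ∀ a : M, or U a = U
  F_and : ∀ a : M, and F a = F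
  T_or : ∀ a : M, or T a = T

namespace CAlgebraAux

open CAlgebra CAlgebraTFU

variable {M : Type*} [CAlgebraTFU M]

/-- De Morgan for `or`, derived. -/
lemma neg_or (a b : M) : neg (or a b) = and (neg a) (neg b) := by
  conv_lhs => rw [← c1 a, ← c1 b, ← c2, c1]

/-- dual absorption: `a ∧ (a ∨ b) = a`. -/
lemma and_absorb (a b : M) : and a (or a b) = a := by
  have h : neg (and a (or a b)) = neg a := by rw [c2, neg_or, c6]
  calc and a (or a b) = neg (neg (and a (or a b))) := (c1 _).symm
    _ = neg (neg a) := by rw [h]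
    _ = a := c1 a

lemma and_self (x : M) : and x x = x := by
  conv_lhs =>
    arg 2
    rw [← or_F x]
  exact and_absorb x F

/-- `(x ∧ y) ∧ x = x ∧ y` (left-regularity). -/
lemma sandwich (x y : M) : and (and x y) x = and x y := by
  have h3 : and x (and x y) = and x y := by rw [← c3, and_self]
  have h2 : or (and (and x y) x) (and x y) = and x y := by
    have h7 := c7 (and x y) x
    rw [h3] at h7
    rw [h7]
    exact c6 (and x y) x
  have h4 := and_absorb (and (and x y) x) (and x y)
  rw [h2] at h4
  rw [← h4, c3 (and x y) x (and x y), h3, and_self]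

/-- `(x ∧ U) ∨ U = U`. -/
lemma star (x : M) : or (and x U) U = U := by
  have h := c7 x (U : M)
  rw [U_and] at h
  rw [h, U_or]

/-- `(x ∨ U) ∧ U = U`. -/
lemma starstar (x : M) : and (or x U) U = U := by
  have h := congrArg neg (star (neg x))
  rw [neg_or, c2, c1, neg_U] at h
  exact h

/-- `(x ∨ ¬x) ∧ U = U`. -/
lemma defU (x : M) : and (or x (neg x)) U = U := by
  have e1 : and (or x (neg x)) U = or (and x U) (and (neg x) U) := by
    rw [c5 x (neg x) U, ← c3 (neg x) (neg x) U, and_self (neg x)]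
  have e2 : or (and x U) (and (neg x) U) = and (or x U) U := by
    rw [c5 x U U, U_and]
  rw [e1, e2, starstar]

/-- `(x ∨ ¬x) ∧ x = x`. -/
lemma defx (x : M) : and (or x (neg x)) x = x := by
  have base : and (or x (and x T)) x = x := by rw [c6, and_self]
  rw [c5 x (and x T) x] at base
  rw [and_self x] at base
  rw [and_T x] at base
  rw [and_self x] at base
  -- base : or x (and (neg x) x) = x
  rw [c5 x (neg x) x, ← c3 (neg x) (neg x) x, and_self (neg x), and_self x]
  exact base

lemma ann_swap (a b : M) (h : or (and b a) (and (neg b) a) = U) :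
    or (and a b) (and (neg a) b) = (U : M) := by
  have hq : and (or b (neg b)) a = U := by
    rw [c5 b (neg b) a, ← c3 (neg b) (neg b) a, and_self (neg b)]
    exact h
  have hqp : and (or b (neg b)) (or a (neg a)) = U := by
    rw [c4 (or b (neg b)) a (neg a), hq, U_or]
  have hpq : and (or a (neg a)) (or b (neg b)) = U := by
    have hs := sandwich (or a (neg a)) (or b (neg b))
    rw [c3 (or a (neg a)) (or b (neg b)) (or a (neg a))] at hs
    rw [hqp] at hs
    rw [defU a] at hs
    exact hs.symm
  conv_lhs => rw [← and_self (neg a)]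
  rw [c3 (neg a) (neg a) b, ← c5 a (neg a) b]
  conv_lhs => rw [← defx b]
  rw [← c3 (or a (neg a)) (or b (neg b)) b, hpq, U_and]

end CAlgebraAux

open CAlgebra CAlgebraTFU in
/-- `b ∈ Ann(a) ↔ a ∈ Ann(b)`, where `Ann(a) = {α : α⟦a,a⟧ = U}` and
`α⟦β,γ⟧ = (α ∧ β) ∨ (¬α ∧ γ)`. -/
theorem stmt16 {M : Type*} [CAlgebraTFU M] (a b : M) :
    or (and b a) (and (neg b) a) = (U : M) ↔
      or (and a b) (and (neg a) b) = (U : M) := by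
  constructor
  · exact CAlgebraAux.ann_swap a b
  · exact CAlgebraAux.ann_swap b a
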